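/- Let K > 0, a > 0, b > 0, c ≥ 0, d ≥ 0, p ≥ 0, r ≥ 0, q > 0 with p + q ≥ 1, a ≥ c·K^q and b·K^q ≥ d. Then there exists a constant C > 0 such that for all u, v ≥ 0: (i) if u ≤ K·v then u^r v^p (a v^q − c u^q) ≥ C · min(u, K·v)^r · |u − K·v|^{p+q}; and (ii) if u ≥ K·v then K · v^r u^p (b u^q − d v^q) ≥ C · min(u, K·v)^r · |u − K·v|^{p+q}. -/

import Mathlib

open Real

private lemma key_aux {q x y : ℝ} (hq : 0 < q) (hy : 0 ≤ y) (hxy : y ≤ x) :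
    min 1 q * x ^ (q - 1) * (x - y) ≤ x ^ q - y ^ q := by
  rcases eq_or_lt_of_le (hy.trans hxy) with hx | hx
  · have hy0 : y = 0 := le_antisymm (hx ▸ hxy) hy
    rw [hy0, ← hx]
    simp
  · rcases le_total q 1 with h1 | h1
    · -- q ≤ 1 : use Bernoulli (concave direction)
      have hmin : min 1 q = q := min_eq_right h1
      rw [hmin]
      have hs : (-1 : ℝ) ≤ y / x - 1 := by
        have : 0 ≤ y / x := div_nonneg hy hx.le
        linarith
      have hb := rpow_one_add_le_one_add_mul_self hs hq.le h1
      rw [show (1 : ℝ) + (y / x - 1) = y / x by ring] at hb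
      have hyx : (y / x) ^ q = y ^ q / x ^ q := Real.div_rpow hy hx.le q
      rw [hyx] at hb
      have hxq : (0 : ℝ) < x ^ q := Real.rpow_pos_of_pos hx q
      have hb2 : y ^ q ≤ x ^ q * (1 + q * (y / x - 1)) := by
        rw [div_le_iff₀ hxq] at hb
        linarith [hb]
      have hx1 : x ^ (q - 1) = x ^ q / x := by
        rw [Real.rpow_sub_one hx.ne']
      have hexp : x ^ q * (1 + q * (y / x - 1)) = x ^ q - q * (x ^ q / x) * (x - y) := by
        field_simp
        ring
      rw [hexp] at hb2
      rw [hx1]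
      linarith
    · -- 1 ≤ q
      have hmin : min 1 q = 1 := min_eq_left h1
      rw [hmin, one_mul]
      have hxx : x ^ (q - 1) * x = x ^ q := by
        rw [Real.rpow_sub_one hx.ne']
        field_simp
      have hyy : y ^ q ≤ y * x ^ (q - 1) := by
        rcases eq_or_lt_of_le hy with hy0 | hy0
        · rw [← hy0, Real.zero_rpow hq.ne']
          simp
        · have : y ^ (q - 1) ≤ x ^ (q - 1) :=
            Real.rpow_le_rpow hy0.le hxy (by linarith)
          calc y ^ q = y * y ^ (q - 1) := by
                rw [Real.rpow_sub_one hy0.ne']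
                field_simp
          _ ≤ y * x ^ (q - 1) := by
                exact mul_le_mul_of_nonneg_left this hy
      nlinarith [hxx, hyy]

/-- pointwise algebraic estimate giving
`f(u,v) ≥ C Z^r W^{p+q}` on `{u ≤ Kv}` and `K g(u,v) ≥ C Z^r W^{p+q}`
on `{u ≥ Kv}`, where `Z = min(u, Kv)`, `W = |u − Kv|`, when `p + q ≥ 1`. -/
theorem stmt_10 (K a b c d p q r : ℝ) (hK : 0 < K)
    (ha : 0 < a) (hb : 0 < b) (hc : 0 ≤ c) (hd : 0 ≤ d)
    (hp : 0 ≤ p) (hr : 0 ≤ r) (hq : 0 < q) (hpq : 1 ≤ p + q)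
    (hacK : c * K ^ q ≤ a) (hbKd : d ≤ b * K ^ q) :
    ∃ C : ℝ, 0 < C ∧ ∀ u v : ℝ, 0 ≤ u → 0 ≤ v →
      (u ≤ K * v →
        C * min u (K * v) ^ r * |u - K * v| ^ (p + q) ≤
          u ^ r * v ^ p * (a * v ^ q - c * u ^ q)) ∧
      (K * v ≤ u →
        C * min u (K * v) ^ r * |u - K * v| ^ (p + q) ≤
          K * (v ^ r * u ^ p * (b * u ^ q - d * v ^ q))) := by
  set m : ℝ := min 1 q with hm_def
  have hm : 0 < m := lt_min one_pos hq
  have hKq : (0 : ℝ) < K ^ q := Real.rpow_pos_of_pos hK q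
  have hKpq : (0 : ℝ) < K ^ (p + q - 1) := Real.rpow_pos_of_pos hK _
  have hKr : (0 : ℝ) < K ^ r := Real.rpow_pos_of_pos hK r
  have hKq1 : (0 : ℝ) < K ^ (q - 1) := Real.rpow_pos_of_pos hK _
  set C₁ : ℝ := a * m * K ^ (q - 1) / (K ^ q * K ^ (p + q - 1)) with hC1_def
  set C₂ : ℝ := b * m * K / K ^ r with hC2_def
  have hC1 : 0 < C₁ := by positivity
  have hC2 : 0 < C₂ := by positivity
  refine ⟨min C₁ C₂, lt_min hC1 hC2, ?_⟩
  intro u v hu hv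
  constructor
  · -- case u ≤ K v
    intro huv
    rw [min_eq_left huv, abs_of_nonpos (by linarith), neg_sub]
    rcases eq_or_lt_of_le huv with heq | hlt
    · -- u = K v, both sides: LHS is 0
      rw [show K * v - u = 0 by linarith, Real.zero_rpow (by linarith : p + q ≠ 0), mul_zero]
      have huq : u ^ q = K ^ q * v ^ q := by
        rw [heq, Real.mul_rpow hK.le hv]
      have hrhs : c * u ^ q ≤ a * v ^ q := by
        rw [huq]
        have := mul_le_mul_of_nonneg_right hacK (Real.rpow_nonneg hv q)
        linarith [this]
      have h1 : 0 ≤ u ^ r * v ^ p := by positivity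
      exact mul_nonneg h1 (by linarith)
    · have hv' : 0 < v := by
        by_contra h
        push_neg at h
        have : v = 0 := le_antisymm h hv
        rw [this, mul_zero] at hlt
        linarith
      have hx : 0 < K * v := mul_pos hK hv'
      set W : ℝ := K * v - u with hW_def
      have hW : 0 < W := by simp [hW_def]; linarith
      -- core inequality
      have key1 : m * (K * v) ^ (q - 1) * W ≤ (K * v) ^ q - u ^ q := by
        have := key_aux hq hu huv
        simpa [hW_def] using this
      have e1 : (K * v) ^ q = K ^ q * v ^ q := Real.mul_rpow hK.le hv
      have e2 : (K * v) ^ (q - 1) = K ^ (q - 1) * v ^ (q - 1) := Real.mul_rpow hK.le hv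
      have e3 : v ^ p * v ^ (q - 1) = v ^ (p + q - 1) := by
        rw [← Real.rpow_add hv']
        ring_nf
      have e4 : W ^ (p + q - 1) ≤ K ^ (p + q - 1) * v ^ (p + q - 1) := by
        calc W ^ (p + q - 1) ≤ (K * v) ^ (p + q - 1) :=
              Real.rpow_le_rpow hW.le (by simp [hW_def]; linarith) (by linarith)
        _ = K ^ (p + q - 1) * v ^ (p + q - 1) := Real.mul_rpow hK.le hv
      have e5 : W ^ (p + q) = W ^ (p + q - 1) * W := by
        rw [← Real.rpow_add_one hW.ne']
        ring_nf
      have hca : c ≤ a / K ^ q := (le_div_iff₀ hKq).mpr hacK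
      have h1 : (a / K ^ q) * ((K * v) ^ q - u ^ q) ≤ a * v ^ q - c * u ^ q := by
        rw [e1]
        have huq0 : 0 ≤ u ^ q := Real.rpow_nonneg hu q
        have hcu : c * u ^ q ≤ (a / K ^ q) * u ^ q :=
          mul_le_mul_of_nonneg_right hca huq0
        have hid : (a / K ^ q) * (K ^ q * v ^ q - u ^ q)
            = a * v ^ q - (a / K ^ q) * u ^ q := by
          field_simp
        rw [hid]
        linarith
      have core : C₁ * W ^ (p + q) ≤ v ^ p * (a * v ^ q - c * u ^ q) := by
        calc C₁ * W ^ (p + q)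
            = (a * m / (K ^ q * K ^ (p + q - 1))) * (K ^ (q - 1) * (W ^ (p + q - 1) * W)) := by
              rw [e5, hC1_def]; ring
          _ ≤ (a * m / (K ^ q * K ^ (p + q - 1))) *
                (K ^ (q - 1) * ((K ^ (p + q - 1) * v ^ (p + q - 1)) * W)) := by
              gcongr <;> first | assumption | positivity
          _ = (a / K ^ q) * (v ^ p * (m * ((K ^ (q - 1) * v ^ (q - 1))) * W)) := by
              rw [← e3]
              field_simp
          _ = (a / K ^ q) * (v ^ p * (m * (K * v) ^ (q - 1) * W)) := by rw [e2]
          _ ≤ (a / K ^ q) * (v ^ p * ((K * v) ^ q - u ^ q)) := by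
              gcongr <;> first | assumption | positivity
          _ = v ^ p * ((a / K ^ q) * ((K * v) ^ q - u ^ q)) := by ring
          _ ≤ v ^ p * (a * v ^ q - c * u ^ q) :=
              mul_le_mul_of_nonneg_left h1 (Real.rpow_nonneg hv p)
      have hur : 0 ≤ u ^ r := Real.rpow_nonneg hu r
      calc min C₁ C₂ * u ^ r * W ^ (p + q)
          ≤ C₁ * u ^ r * W ^ (p + q) :=
            mul_le_mul_of_nonneg_right
              (mul_le_mul_of_nonneg_right (min_le_left _ _) (Real.rpow_nonneg hu r))
              (Real.rpow_nonneg hW.le _)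
        _ = u ^ r * (C₁ * W ^ (p + q)) := by ring
        _ ≤ u ^ r * (v ^ p * (a * v ^ q - c * u ^ q)) :=
            mul_le_mul_of_nonneg_left core hur
        _ = u ^ r * v ^ p * (a * v ^ q - c * u ^ q) := by ring
  · -- case K v ≤ u
    intro hvu
    rw [min_eq_right hvu, abs_of_nonneg (by linarith)]
    rcases eq_or_lt_of_le hvu with heq | hlt
    · rw [show u - K * v = 0 by linarith, Real.zero_rpow (by linarith : p + q ≠ 0), mul_zero]
      have huq : u ^ q = K ^ q * v ^ q := by
        rw [← heq, Real.mul_rpow hK.le hv]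
      have hrhs : d * v ^ q ≤ b * u ^ q := by
        rw [huq]
        have := mul_le_mul_of_nonneg_right hbKd (Real.rpow_nonneg hv q)
        linarith [this]
      have h1 : 0 ≤ v ^ r * u ^ p := by positivity
      exact mul_nonneg hK.le (mul_nonneg h1 (by linarith))
    · have hu' : 0 < u := lt_of_le_of_lt (by positivity) hlt
      set W : ℝ := u - K * v with hW_def
      have hW : 0 < W := by simp [hW_def]; linarith
      have key2 : m * u ^ (q - 1) * W ≤ u ^ q - (K * v) ^ q := by
        have := key_aux hq (by positivity : (0:ℝ) ≤ K * v) hvu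
        simpa [hW_def] using this
      have e1 : (K * v) ^ q = K ^ q * v ^ q := Real.mul_rpow hK.le hv
      have e3 : u ^ p * u ^ (q - 1) = u ^ (p + q - 1) := by
        rw [← Real.rpow_add hu']
        ring_nf
      have e4 : W ^ (p + q - 1) ≤ u ^ (p + q - 1) :=
        Real.rpow_le_rpow hW.le (by simp [hW_def]; positivity) (by linarith)
      have e5 : W ^ (p + q) = W ^ (p + q - 1) * W := by
        rw [← Real.rpow_add_one hW.ne']
        ring_nf
      have hvr : (K * v) ^ r = K ^ r * v ^ r := Real.mul_rpow hK.le hv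
      have hdb : d * v ^ q ≤ b * (K * v) ^ q := by
        rw [e1]
        have := mul_le_mul_of_nonneg_right hbKd (Real.rpow_nonneg hv q)
        linarith [this]
      calc min C₁ C₂ * (K * v) ^ r * W ^ (p + q)
          ≤ C₂ * (K * v) ^ r * W ^ (p + q) :=
            mul_le_mul_of_nonneg_right
              (mul_le_mul_of_nonneg_right (min_le_right _ _)
                (Real.rpow_nonneg (by positivity) r))
              (Real.rpow_nonneg hW.le _)
        _ = (K / K ^ r) * (K * v) ^ r * (b * m * (W ^ (p + q - 1) * W)) := by
            rw [e5, hC2_def]; ring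
        _ ≤ (K / K ^ r) * (K * v) ^ r * (b * m * (u ^ (p + q - 1) * W)) := by
            gcongr <;> first | assumption | positivity
        _ = (K / K ^ r) * (K * v) ^ r * (b * (m * u ^ (q - 1) * W) * u ^ p) := by
            rw [← e3]; ring
        _ ≤ (K / K ^ r) * (K * v) ^ r * (b * (u ^ q - (K * v) ^ q) * u ^ p) := by
            gcongr <;> first | assumption | positivity
        _ = (K / K ^ r) * (K * v) ^ r * (u ^ p * (b * u ^ q - b * (K * v) ^ q)) := by ring
        _ ≤ (K / K ^ r) * (K * v) ^ r * (u ^ p * (b * u ^ q - d * v ^ q)) := by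
            gcongr <;> first | assumption | positivity
        _ = K * (((K ^ r * v ^ r) / K ^ r) * u ^ p * (b * u ^ q - d * v ^ q)) := by
            rw [hvr]; ring
        _ = K * (v ^ r * u ^ p * (b * u ^ q - d * v ^ q)) := by
            field_simp
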